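/- arXiv:math/0209163 — 2 statements merged into one kernel-verified Lean document; each statement's English description precedes it below -/
import Mathlib

section
/- Let G be a group with finite symmetric generating set S whose word metric d_S is δ-hyperbolic (δ ≥ 0), let H be a finite subgroup of G, let y₀ ∈ G, and set R = d(Hy₀), the diameter of the orbit Hy₀. Then there exists x ∈ G such that d(Hx, Hy₀) ≤ ⌊R/2⌋ + 2δ + 1 and d(Hx) ≤ 8δ + 4. -/
/-- The word metric on a group `G` with respect to a generating set `S`:
`wordDist S x y` is the least `n` such that `x⁻¹ * y` is a product of `n` elements of `S`. -/
noncomputable def wordDist {G : Type*} [Group G] (S : Set G) (x y : G) : ℕ :=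
  sInf {n : ℕ | ∃ l : List G, (∀ s ∈ l, s ∈ S) ∧ l.length = n ∧ x⁻¹ * y = l.prod}

/-- A distance function `d` on `X` is `δ`-hyperbolic if for all `x,y,z,t` one has
`d x y + d z t ≤ max (d x z + d y t) (d x t + d y z) + 2δ`. -/
def IsHyperbolicDist {X : Type*} (d : X → X → ℝ) (δ : ℝ) : Prop :=
  ∀ x y z t : X, d x y + d z t ≤ max (d x z + d y t) (d x t + d y z) + 2 * δ

/-- The orbit `Hx = {h * x : h ∈ H}` of a point `x` under a subgroup `H`. -/
def orb {G : Type*} [Group G] (H : Subgroup G) (x : G) : Set G :=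
  (fun h => h * x) '' (H : Set G)

/-- `setD S K L = max_{k ∈ K, l ∈ L} d_S(k,l)`, the maximal word-metric distance between
the (finite) sets `K` and `L`.  `setD S K K` is the diameter of `K`. -/
noncomputable def setD {G : Type*} [Group G] (S : Set G) (K L : Set G) : ℕ :=
  sSup {n : ℕ | ∃ k ∈ K, ∃ l ∈ L, wordDist S k l = n}

section aux
variable {G : Type*} [Group G]

lemma wordDist_le_of_list (S : Set G) {x y : G} {l : List G}
    (hl : ∀ s ∈ l, s ∈ S) (h : x⁻¹ * y = l.prod) :
    wordDist S x y ≤ l.length :=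
  Nat.sInf_le ⟨l, hl, rfl, h⟩

lemma wordDist_mul_left (S : Set G) (g x y : G) :
    wordDist S (g * x) (g * y) = wordDist S x y := by
  have h : (g * x)⁻¹ * (g * y) = x⁻¹ * y := by group
  unfold wordDist
  rw [h]

lemma exists_word (S : Set G) (hsymm : S⁻¹ = S) (hgen : Subgroup.closure S = ⊤)
    (x y : G) :
    ∃ l : List G, (∀ s ∈ l, s ∈ S) ∧ x⁻¹ * y = l.prod := by
  have hx : x⁻¹ * y ∈ (Subgroup.closure S).toSubmonoid := by
    rw [hgen]; trivial
  rw [Subgroup.closure_toSubmonoid, hsymm, Set.union_self] at hx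
  obtain ⟨l, hl, hp⟩ := Submonoid.exists_list_of_mem_closure hx
  exact ⟨l, hl, hp.symm⟩

lemma wordDist_spec (S : Set G) (hsymm : S⁻¹ = S) (hgen : Subgroup.closure S = ⊤)
    (x y : G) :
    ∃ l : List G, (∀ s ∈ l, s ∈ S) ∧ l.length = wordDist S x y ∧ x⁻¹ * y = l.prod := by
  have hne : {n : ℕ | ∃ l : List G, (∀ s ∈ l, s ∈ S) ∧ l.length = n ∧
      x⁻¹ * y = l.prod}.Nonempty := by
    obtain ⟨l, hl, hp⟩ := exists_word S hsymm hgen x y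
    exact ⟨l.length, l, hl, rfl, hp⟩
  exact Nat.sInf_mem hne

lemma setD_T_finite (S : Set G) {K L : Set G} (hK : K.Finite) (hL : L.Finite) :
    {n : ℕ | ∃ k ∈ K, ∃ l ∈ L, wordDist S k l = n}.Finite := by
  apply Set.Finite.subset ((hK.prod hL).image (fun p => wordDist S p.1 p.2))
  rintro n ⟨k, hk, l, hl, rfl⟩
  exact ⟨(k, l), ⟨hk, hl⟩, rfl⟩

lemma le_setD (S : Set G) {K L : Set G} (hK : K.Finite) (hL : L.Finite)
    {k l : G} (hk : k ∈ K) (hl : l ∈ L) :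
    wordDist S k l ≤ setD S K L :=
  le_csSup (setD_T_finite S hK hL).bddAbove ⟨k, hk, l, hl, rfl⟩

lemma setD_mem (S : Set G) {K L : Set G} (hK : K.Finite) (hL : L.Finite)
    {k₀ l₀ : G} (hk₀ : k₀ ∈ K) (hl₀ : l₀ ∈ L) :
    setD S K L ∈ {n : ℕ | ∃ k ∈ K, ∃ l ∈ L, wordDist S k l = n} :=
  Nat.sSup_mem ⟨wordDist S k₀ l₀, k₀, hk₀, l₀, hl₀, rfl⟩
    (setD_T_finite S hK hL).bddAbove

end aux

/-- Lemma 4(a): given a finite subgroup `H` and a vertex `y₀` with orbit diameter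
`R = d(Hy₀)`, there is a vertex `x` with `d(Hx, Hy₀) ≤ ⌊R/2⌋ + 2δ + 1` and
`d(Hx) ≤ 8δ + 4`. -/
theorem small_orbits_a
    {G : Type*} [Group G] (S : Set G) (hfin : S.Finite) (hsymm : S⁻¹ = S)
    (hone : (1 : G) ∉ S) (hgen : Subgroup.closure S = ⊤)
    (δ : ℝ) (hδ : 0 ≤ δ)
    (hhyp : IsHyperbolicDist (fun x y => (wordDist S x y : ℝ)) δ)
    (H : Subgroup G) (hH : ((H : Subgroup G) : Set G).Finite)
    (y₀ : G) (R : ℕ) (hR : R = setD S (orb H y₀) (orb H y₀)) :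
    ∃ x : G,
      (setD S (orb H x) (orb H y₀) : ℝ) ≤ (R / 2 : ℕ) + 2 * δ + 1 ∧
      (setD S (orb H x) (orb H x) : ℝ) ≤ 8 * δ + 4 := by
  classical
  have horbfin : ∀ z : G, (orb H z).Finite := fun z => hH.image _
  have horbne : ∀ z : G, z ∈ orb H z := fun z => ⟨1, H.one_mem, one_mul z⟩
  -- obtain a, b in the orbit realizing the diameter R
  have hmemR : R ∈ {n : ℕ | ∃ k ∈ orb H y₀, ∃ l ∈ orb H y₀, wordDist S k l = n} := by
    rw [hR]
    exact setD_mem S (horbfin y₀) (horbfin y₀) (horbne y₀) (horbne y₀)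
  obtain ⟨a, ha, b, hb, hab⟩ := hmemR
  -- a geodesic word from a to b
  obtain ⟨l, hlS, hllen, hlprod⟩ := wordDist_spec S hsymm hgen a b
  rw [hab] at hllen
  set m : ℕ := R / 2 with hm
  have hmR : m ≤ R := Nat.div_le_self R 2
  set x : G := a * (l.take m).prod with hx
  -- d(x, a) ≤ m
  have hxa : wordDist S x a ≤ m := by
    have hp : x⁻¹ * a = (((l.take m).map fun s => s⁻¹).reverse).prod := by
      rw [← List.prod_inv_reverse]
      simp [hx, mul_inv_rev]
    have hS : ∀ s ∈ ((l.take m).map fun s => s⁻¹).reverse, s ∈ S := by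
      intro s hs
      rw [List.mem_reverse, List.mem_map] at hs
      obtain ⟨t, ht, rfl⟩ := hs
      have htS : t ∈ S := hlS t (List.mem_of_mem_take ht)
      rw [← hsymm]
      exact Set.inv_mem_inv.mpr htS
    have := wordDist_le_of_list S hS hp
    simpa [hllen, hmR] using this
  -- d(x, b) ≤ R - m
  have hxb : wordDist S x b ≤ R - m := by
    have hp : x⁻¹ * b = (l.drop m).prod := by
      have : (l.take m).prod * (l.drop m).prod = l.prod :=
        List.prod_take_mul_prod_drop l m
      rw [hx, mul_inv_rev, mul_assoc, hlprod, ← this]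
      group
    have hS : ∀ s ∈ l.drop m, s ∈ S := fun s hs => hlS s (List.mem_of_mem_drop hs)
    have := wordDist_le_of_list S hS hp
    simpa [hllen] using this
  -- real-number versions
  have hxaR : (wordDist S x a : ℝ) ≤ m := by exact_mod_cast hxa
  have hxbR : (wordDist S x b : ℝ) ≤ (R : ℝ) - m := by
    have : (wordDist S x b : ℝ) ≤ ((R - m : ℕ) : ℝ) := by exact_mod_cast hxb
    rwa [Nat.cast_sub hmR] at this
  have hRm : (R : ℝ) - m ≤ m + 1 := by
    have : R ≤ 2 * m + 1 := by omega
    have := (Nat.cast_le (α := ℝ)).mpr this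
    push_cast at this
    linarith
  -- Claim 1 : every orbit point of y₀ is within m + 2δ + 1 of x
  have claim1 : ∀ g ∈ orb H y₀, (wordDist S x g : ℝ) ≤ m + 2 * δ + 1 := by
    intro g hg
    have h4 := hhyp x g a b
    simp only at h4
    have hga : (wordDist S g a : ℝ) ≤ R := by
      have := le_setD S (horbfin y₀) (horbfin y₀) hg ha
      rw [← hR] at this
      exact_mod_cast this
    have hgb : (wordDist S g b : ℝ) ≤ R := by
      have := le_setD S (horbfin y₀) (horbfin y₀) hg hb
      rw [← hR] at this
      exact_mod_cast this
    have habR : (wordDist S a b : ℝ) = R := by exact_mod_cast hab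
    have hmax : max ((wordDist S x a : ℝ) + wordDist S g b)
        ((wordDist S x b : ℝ) + wordDist S g a) ≤ (m : ℝ) + 1 + R :=
      max_le (by linarith) (by linarith)
    linarith
  refine ⟨x, ?_, ?_⟩
  · -- d(Hx, Hy₀) ≤ m + 2δ + 1
    obtain ⟨k, hk, g, hg, hkg⟩ :=
      setD_mem S (horbfin x) (horbfin y₀) (horbne x) (horbne y₀)
    obtain ⟨h₁, hh₁, rfl⟩ := hk
    have hrw : wordDist S (h₁ * x) g = wordDist S x (h₁⁻¹ * g) := by
      rw [← wordDist_mul_left S h₁⁻¹ (h₁ * x) g, inv_mul_cancel_left]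
    have hmem : h₁⁻¹ * g ∈ orb H y₀ := by
      obtain ⟨h₂, hh₂, rfl⟩ := hg
      exact ⟨h₁⁻¹ * h₂, H.mul_mem (H.inv_mem hh₁) hh₂, by simp [mul_assoc]⟩
    have := claim1 _ hmem
    rw [← hrw, hkg] at this
    linarith
  · -- d(Hx) ≤ 8δ + 4
    obtain ⟨k1, hk1, k2, hk2, hkk⟩ :=
      setD_mem S (horbfin x) (horbfin x) (horbne x) (horbne x)
    obtain ⟨h₁, hh₁, rfl⟩ := hk1
    obtain ⟨h₂, hh₂, rfl⟩ := hk2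
    set k : G := h₁⁻¹ * h₂ with hkdef
    have hkH : k ∈ H := H.mul_mem (H.inv_mem hh₁) hh₂
    have hrw : wordDist S (h₁ * x) (h₂ * x) = wordDist S x (k * x) := by
      rw [← wordDist_mul_left S h₁⁻¹ (h₁ * x) (h₂ * x), inv_mul_cancel_left,
        ← mul_assoc, hkdef]
    have hkaorb : k * a ∈ orb H y₀ := by
      obtain ⟨ha₁, hha₁, rfl⟩ := ha
      exact ⟨k * ha₁, H.mul_mem hkH hha₁, by simp [mul_assoc]⟩
    have hkborb : k * b ∈ orb H y₀ := by
      obtain ⟨hb₁, hhb₁, rfl⟩ := hb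
      exact ⟨k * hb₁, H.mul_mem hkH hhb₁, by simp [mul_assoc]⟩
    have h4 := hhyp x (k * x) (k * a) (k * b)
    simp only at h4
    rw [wordDist_mul_left S k a b, wordDist_mul_left S k x b,
      wordDist_mul_left S k x a] at h4
    -- here wordDist (k*x) (k*b) etc need rewriting; done via the lemma but the
    -- occurrences in h4 are (wordDist S (k*x) (k*b)); handle below
    have hxka := claim1 _ hkaorb
    have hxkb := claim1 _ hkborb
    have habR : (wordDist S a b : ℝ) = R := by exact_mod_cast hab
    have hmax : max ((wordDist S x (k * a) : ℝ) + wordDist S x b)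
        ((wordDist S x (k * b) : ℝ) + wordDist S x a) ≤ (R : ℝ) + 2 * δ + 1 := by
      apply max_le
      · linarith
      · have h2m : (2 : ℝ) * m ≤ R := by
          have : 2 * m ≤ R := by omega
          exact_mod_cast this
        linarith
    have hfinal : (wordDist S x (k * x) : ℝ) ≤ 4 * δ + 1 := by linarith
    rw [← hrw, hkk] at hfinal
    linarith
end

section
/- Let G be a group with finite symmetric generating set S whose word metric d_S is δ-hyperbolic (δ ≥ 0), let H be a finite subgroup of G, let y₀ ∈ G, and set R = d(Hy₀). Assume R ≥ 8δ + 2 and that x₀ ∈ G satisfies d_S(y₀, x₀) = d(Hy₀, {x₀}) (i.e., y₀ is a point of its orbit farthest from x₀). Then there exists x ∈ G such that simultaneously d(Hx, Hy₀) ≤ ⌊R/2⌋ + 2δ + 1, d(Hx) ≤ 8δ + 4, and d(Hx, {x₀}) ≤ d_S(x₀, y₀). -/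
section Aux

variable {G : Type*} [Group G] {S : Set G}

lemma myExistsWord (hsymm : S⁻¹ = S) (hgen : Subgroup.closure S = ⊤) (g : G) :
    ∃ l : List G, (∀ s ∈ l, s ∈ S) ∧ g = l.prod := by
  have h1 : g ∈ Subgroup.closure S := by rw [hgen]; trivial
  have h2 : g ∈ Submonoid.closure S := by
    have h3 : g ∈ (Subgroup.closure S).toSubmonoid := h1
    rwa [Subgroup.closure_toSubmonoid, hsymm, Set.union_self] at h3
  obtain ⟨l, hl, hp⟩ := Submonoid.exists_list_of_mem_closure h2
  exact ⟨l, hl, hp.symm⟩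

lemma myWordDistSpec (hsymm : S⁻¹ = S) (hgen : Subgroup.closure S = ⊤) (x y : G) :
    ∃ l : List G, (∀ s ∈ l, s ∈ S) ∧ l.length = wordDist S x y ∧ x⁻¹ * y = l.prod := by
  obtain ⟨l, hl, hp⟩ := myExistsWord hsymm hgen (x⁻¹ * y)
  have hne : {n : ℕ | ∃ l : List G, (∀ s ∈ l, s ∈ S) ∧ l.length = n ∧ x⁻¹ * y = l.prod}.Nonempty :=
    ⟨l.length, l, hl, rfl, hp⟩
  exact Nat.sInf_mem hne

lemma myWordDistLe (x y : G) (l : List G) (hl : ∀ s ∈ l, s ∈ S) (hp : x⁻¹ * y = l.prod) :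
    wordDist S x y ≤ l.length :=
  Nat.sInf_le ⟨l, hl, rfl, hp⟩

lemma myWordDistLeft (g x y : G) : wordDist S (g * x) (g * y) = wordDist S x y := by
  have h : (g * x)⁻¹ * (g * y) = x⁻¹ * y := by group
  unfold wordDist
  rw [h]

lemma myWordDistMulLeft (g a b : G) : wordDist S (g * a) b = wordDist S a (g⁻¹ * b) := by
  have h : g * (g⁻¹ * b) = b := by group
  conv_lhs => rw [← h]
  rw [myWordDistLeft]

lemma myWordDistSymm (hsymm : S⁻¹ = S) (x y : G) : wordDist S x y = wordDist S y x := by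
  have key : ∀ a b : G,
      {n : ℕ | ∃ l : List G, (∀ s ∈ l, s ∈ S) ∧ l.length = n ∧ a⁻¹ * b = l.prod} ⊆
      {n : ℕ | ∃ l : List G, (∀ s ∈ l, s ∈ S) ∧ l.length = n ∧ b⁻¹ * a = l.prod} := by
    rintro a b n ⟨l, hl, hlen, hp⟩
    refine ⟨(l.map fun t => t⁻¹).reverse, ?_, by simp [hlen], ?_⟩
    · intro s hs
      simp only [List.mem_reverse, List.mem_map] at hs
      obtain ⟨t, ht, rfl⟩ := hs
      rw [← hsymm]
      exact Set.inv_mem_inv.mpr (hl t ht)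
    · rw [← List.prod_inv_reverse, ← hp]
      group
  unfold wordDist
  exact congrArg sInf (Set.Subset.antisymm (key x y) (key y x))

lemma mySetDFin {K L : Set G} (hK : K.Finite) (hL : L.Finite) :
    {n : ℕ | ∃ k ∈ K, ∃ l ∈ L, wordDist S k l = n}.Finite := by
  have : {n : ℕ | ∃ k ∈ K, ∃ l ∈ L, wordDist S k l = n} ⊆
      (fun p : G × G => wordDist S p.1 p.2) '' (K ×ˢ L) := by
    rintro n ⟨k, hk, l, hl, rfl⟩
    exact ⟨(k, l), ⟨hk, hl⟩, rfl⟩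
  exact Set.Finite.subset ((hK.prod hL).image _) this

lemma myLeSetD {K L : Set G} (hK : K.Finite) (hL : L.Finite) {k l : G}
    (hk : k ∈ K) (hl : l ∈ L) : wordDist S k l ≤ setD S K L :=
  le_csSup (mySetDFin hK hL).bddAbove ⟨k, hk, l, hl, rfl⟩

lemma mySetDMem {K L : Set G} (hK : K.Finite) (hL : L.Finite)
    (hK' : K.Nonempty) (hL' : L.Nonempty) :
    ∃ k ∈ K, ∃ l ∈ L, wordDist S k l = setD S K L := by
  obtain ⟨k, hk⟩ := hK'
  obtain ⟨l, hl⟩ := hL'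
  have hne : {n : ℕ | ∃ k ∈ K, ∃ l ∈ L, wordDist S k l = n}.Nonempty :=
    ⟨wordDist S k l, k, hk, l, hl, rfl⟩
  have := Set.Nonempty.csSup_mem hne (mySetDFin hK hL)
  exact this

end Aux

/-- Lemma 4(a)+(b): if moreover `R ≥ 8δ + 2` and `y₀` is a point of its orbit
farthest from `x₀`, then `x` can be chosen with in addition `d(Hx, x₀) ≤ d(x₀, y₀)`. -/
theorem small_orbits_b
    {G : Type*} [Group G] (S : Set G) (hfin : S.Finite) (hsymm : S⁻¹ = S)
    (hone : (1 : G) ∉ S) (hgen : Subgroup.closure S = ⊤)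
    (δ : ℝ) (hδ : 0 ≤ δ)
    (hhyp : IsHyperbolicDist (fun x y => (wordDist S x y : ℝ)) δ)
    (H : Subgroup G) (hH : ((H : Subgroup G) : Set G).Finite)
    (y₀ : G) (R : ℕ) (hR : R = setD S (orb H y₀) (orb H y₀))
    (hRbig : (R : ℝ) ≥ 8 * δ + 2)
    (x₀ : G) (hfar : wordDist S y₀ x₀ = setD S (orb H y₀) {x₀}) :
    ∃ x : G,
      (setD S (orb H x) (orb H y₀) : ℝ) ≤ (R / 2 : ℕ) + 2 * δ + 1 ∧
      (setD S (orb H x) (orb H x) : ℝ) ≤ 8 * δ + 4 ∧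
      setD S (orb H x) {x₀} ≤ wordDist S x₀ y₀ := by
  classical
  have horbfin : ∀ a : G, (orb H a).Finite := fun a => hH.image _
  have horbne : ∀ a : G, (orb H a).Nonempty := fun a => ⟨a, 1, H.one_mem, one_mul a⟩
  have hmemorb : ∀ (g a : G), g ∈ H → g * a ∈ orb H a := fun g a hg => ⟨g, hg, rfl⟩
  -- find h ∈ H with wordDist y₀ (h y₀) = R
  obtain ⟨k, hk, l, hl, hkl⟩ := mySetDMem (S := S) (horbfin y₀) (horbfin y₀)
    (horbne y₀) (horbne y₀)
  obtain ⟨h₁, hh₁, rfl⟩ := hk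
  obtain ⟨h₂, hh₂, rfl⟩ := hl
  set h : G := h₁⁻¹ * h₂ with hhdef
  have hhH : h ∈ H := H.mul_mem (H.inv_mem hh₁) hh₂
  have hkl' : wordDist S (h₁ * y₀) (h₂ * y₀) = setD S (orb H y₀) (orb H y₀) := hkl
  have hexact : wordDist S y₀ (h * y₀) = R := by
    have e : wordDist S (h₁ * y₀) (h₂ * y₀) = wordDist S y₀ (h * y₀) := by
      rw [myWordDistMulLeft, hhdef, mul_assoc]
    rw [hR, ← hkl', e]
  -- geodesic: the midpoint x
  obtain ⟨L, hLS, hLlen, hLprod⟩ := myWordDistSpec hsymm hgen y₀ (h * y₀)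
  rw [hexact] at hLlen
  set m : ℕ := R / 2 with hmdef
  have hmR : m ≤ R := Nat.div_le_self _ _
  have hR2m : R ≤ 2 * m + 1 := by omega
  have h2mR : 2 * m ≤ R := by omega
  set x : G := y₀ * (L.take m).prod with hxdef
  have hA : wordDist S y₀ x ≤ m := by
    have := myWordDistLe (S := S) y₀ x (L.take m)
      (fun s hs => hLS s (List.mem_of_mem_take hs)) (by rw [hxdef]; group)
    simpa [List.length_take, hLlen, Nat.min_eq_left hmR] using this
  have hB : wordDist S x (h * y₀) ≤ R - m := by
    have hp : x⁻¹ * (h * y₀) = (L.drop m).prod := by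
      have hsplit : (L.take m).prod * (L.drop m).prod = L.prod := by
        rw [← List.prod_append, List.take_append_drop]
      have e : x⁻¹ * (h * y₀) = (L.take m).prod⁻¹ * (y₀⁻¹ * (h * y₀)) := by
        rw [hxdef]; group
      rw [e, hLprod, ← hsplit]
      group
    have := myWordDistLe (S := S) x (h * y₀) (L.drop m)
      (fun s hs => hLS s (List.mem_of_mem_drop hs)) hp
    simpa [List.length_drop, hLlen] using this
  -- real versions
  have hRm : ((R - m : ℕ) : ℝ) = (R : ℝ) - m := by
    push_cast [Nat.cast_sub hmR]; ring
  have hAr : (wordDist S y₀ x : ℝ) ≤ (m : ℝ) := by exact_mod_cast hA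
  have hBr : (wordDist S x (h * y₀) : ℝ) ≤ (R : ℝ) - m := by
    rw [← hRm]; exact_mod_cast hB
  have hmRr : (2 : ℝ) * m ≤ R := by exact_mod_cast h2mR
  have hR2mr : (R : ℝ) ≤ 2 * m + 1 := by exact_mod_cast hR2m
  have hexactr : (wordDist S y₀ (h * y₀) : ℝ) = R := by exact_mod_cast hexact
  have horbD : ∀ z₁ z₂ : G, z₁ ∈ orb H y₀ → z₂ ∈ orb H y₀ →
      (wordDist S z₁ z₂ : ℝ) ≤ R := by
    intro z₁ z₂ h1 h2
    exact_mod_cast hR ▸ Nat.cast_le.mpr (myLeSetD (horbfin y₀) (horbfin y₀) h1 h2)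
  -- Claim 1
  have claim1 : ∀ g ∈ H, (wordDist S x (g * y₀) : ℝ) ≤ (R : ℝ) - m + 2 * δ := by
    intro g hg
    have h4 := hhyp x (g * y₀) y₀ (h * y₀)
    simp only at h4
    have e1 : (wordDist S x y₀ : ℝ) ≤ (m : ℝ) := by
      rw [myWordDistSymm hsymm]; exact hAr
    have e2 : (wordDist S (g * y₀) (h * y₀) : ℝ) ≤ R :=
      horbD _ _ (hmemorb g y₀ hg) (hmemorb h y₀ hhH)
    have e3 : (wordDist S (g * y₀) y₀ : ℝ) ≤ R := by
      have : y₀ ∈ orb H y₀ := ⟨1, H.one_mem, one_mul y₀⟩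
      exact horbD _ _ (hmemorb g y₀ hg) this
    have hmax : max ((wordDist S x y₀ : ℝ) + wordDist S (g * y₀) (h * y₀))
        ((wordDist S x (h * y₀) : ℝ) + wordDist S (g * y₀) y₀) ≤ ((R : ℝ) - m) + R :=
      max_le (by linarith) (by linarith)
    rw [hexactr] at h4
    linarith
  -- Claim 2
  have claim2 : ∀ g ∈ H, (wordDist S x (g * x) : ℝ) ≤ 4 * δ + 1 := by
    intro g hg
    have h4 := hhyp x (g * x) y₀ (h * y₀)
    simp only at h4
    have e1 : (wordDist S x y₀ : ℝ) ≤ (m : ℝ) := by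
      rw [myWordDistSymm hsymm]; exact hAr
    have e2 : (wordDist S (g * x) (h * y₀) : ℝ) ≤ (R : ℝ) - m + 2 * δ := by
      rw [myWordDistMulLeft, ← mul_assoc]
      exact claim1 _ (H.mul_mem (H.inv_mem hg) hhH)
    have e3 : (wordDist S (g * x) y₀ : ℝ) ≤ (R : ℝ) - m + 2 * δ := by
      rw [myWordDistMulLeft]
      have := claim1 g⁻¹ (H.inv_mem hg)
      linarith
    have hmax : max ((wordDist S x y₀ : ℝ) + wordDist S (g * x) (h * y₀))
        ((wordDist S x (h * y₀) : ℝ) + wordDist S (g * x) y₀) ≤ (R : ℝ) + 1 + 2 * δ :=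
      max_le (by linarith) (by linarith)
    rw [hexactr] at h4
    linarith
  -- distances to x₀
  have hDbound : ∀ z : G, z ∈ orb H y₀ → (wordDist S z x₀ : ℝ) ≤ (wordDist S y₀ x₀ : ℝ) := by
    intro z hz
    have := myLeSetD (S := S) (horbfin y₀) (Set.finite_singleton x₀) hz rfl
    rw [← hfar] at this
    exact_mod_cast this
  -- Claim 3
  have claim3 : ∀ g ∈ H, (wordDist S (g * x) x₀ : ℝ) ≤ (wordDist S y₀ x₀ : ℝ) := by
    intro g hg
    have h4 := hhyp (g * x) x₀ (g * y₀) (g * (h * y₀))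
    simp only at h4
    have e0 : (wordDist S (g * y₀) (g * (h * y₀)) : ℝ) = R := by
      rw [myWordDistLeft]; exact hexactr
    have e1 : (wordDist S (g * x) (g * y₀) : ℝ) ≤ (m : ℝ) := by
      rw [myWordDistLeft, myWordDistSymm hsymm]; exact hAr
    have e2 : (wordDist S x₀ (g * (h * y₀)) : ℝ) ≤ (wordDist S y₀ x₀ : ℝ) := by
      rw [myWordDistSymm hsymm]
      refine hDbound _ ⟨g * h, H.mul_mem hg hhH, ?_⟩
      simp [mul_assoc]
    have e3 : (wordDist S (g * x) (g * (h * y₀)) : ℝ) ≤ (R : ℝ) - m := by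
      rw [myWordDistLeft]; exact hBr
    have e4 : (wordDist S x₀ (g * y₀) : ℝ) ≤ (wordDist S y₀ x₀ : ℝ) := by
      rw [myWordDistSymm hsymm]
      exact hDbound _ (hmemorb g y₀ hg)
    have hm2δ : (2 : ℝ) * δ ≤ m := by linarith
    have hmax : max ((wordDist S (g * x) (g * y₀) : ℝ) + wordDist S x₀ (g * (h * y₀)))
        ((wordDist S (g * x) (g * (h * y₀)) : ℝ) + wordDist S x₀ (g * y₀)) ≤
        (wordDist S y₀ x₀ : ℝ) + ((R : ℝ) - m) :=
      max_le (by linarith) (by linarith)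
    rw [e0] at h4
    linarith
  refine ⟨x, ?_, ?_, ?_⟩
  · -- d(Hx, Hy₀)
    obtain ⟨k, hk, l, hl, hkl⟩ := mySetDMem (S := S) (horbfin x) (horbfin y₀)
      (horbne x) (horbne y₀)
    obtain ⟨g₁, hg₁, rfl⟩ := hk
    obtain ⟨g₂, hg₂, rfl⟩ := hl
    have hkl' : wordDist S (g₁ * x) (g₂ * y₀) = setD S (orb H x) (orb H y₀) := hkl
    rw [← hkl', myWordDistMulLeft, ← mul_assoc]
    have := claim1 _ (H.mul_mem (H.inv_mem hg₁) hg₂)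
    linarith
  · -- diameter of Hx
    obtain ⟨k, hk, l, hl, hkl⟩ := mySetDMem (S := S) (horbfin x) (horbfin x)
      (horbne x) (horbne x)
    obtain ⟨g₁, hg₁, rfl⟩ := hk
    obtain ⟨g₂, hg₂, rfl⟩ := hl
    have hkl' : wordDist S (g₁ * x) (g₂ * x) = setD S (orb H x) (orb H x) := hkl
    rw [← hkl', myWordDistMulLeft, ← mul_assoc]
    have := claim2 _ (H.mul_mem (H.inv_mem hg₁) hg₂)
    linarith
  · -- d(Hx, x₀)
    obtain ⟨k, hk, l, hl, hkl⟩ := mySetDMem (S := S) (horbfin x) (Set.finite_singleton x₀)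
      (horbne x) ⟨x₀, rfl⟩
    obtain ⟨g, hg, rfl⟩ := hk
    have hlx : l = x₀ := hl
    have hkl' : wordDist S (g * x) l = setD S (orb H x) {x₀} := hkl
    rw [← hkl', hlx, myWordDistSymm hsymm x₀ y₀]
    have := claim3 g hg
    exact_mod_cast this
end
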